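/- In Euclidean ℝ^d with d ≥ 1, set a = 1/(4√d). For every x with 1/2 ≤ ‖x‖₂ ≤ 1, there exists a coordinate k and a sign ε ∈ {−1, +1} such that ‖x − ε a e^k‖₂² ≤ 1 − 3/(16d). Hence the 2d balls of radius r with r² = 1 − 3/(16d) centered at ± a e^j cover {x : 1/2 ≤ ‖x‖₂ ≤ 1}. -/

import Mathlib

set_option maxHeartbeats 1000000 in
theorem stmt18 (d : ℕ) (hd : 1 ≤ d) (a r : ℝ)
    (ha : a = 1 / (4 * Real.sqrt d)) (hr : r = Real.sqrt (1 - 3 / (16 * d))) :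
    (∀ x : EuclideanSpace ℝ (Fin d), 1 / 2 ≤ ‖x‖ → ‖x‖ ≤ 1 →
      ∃ (k : Fin d) (ε : ℝ), (ε = 1 ∨ ε = -1) ∧
        ‖x - (ε * a) • EuclideanSpace.single k 1‖ ^ 2 ≤ 1 - 3 / (16 * d)) ∧
    {x : EuclideanSpace ℝ (Fin d) | 1 / 2 ≤ ‖x‖ ∧ ‖x‖ ≤ 1} ⊆
      (⋃ j, Metric.closedBall (a • EuclideanSpace.single j 1) r) ∪
      (⋃ j, Metric.closedBall (-(a • EuclideanSpace.single j 1)) r) := by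
  have hd0 : (0:ℝ) < d := by exact_mod_cast hd
  have hs : (0:ℝ) < Real.sqrt d := Real.sqrt_pos.mpr hd0
  have hs2 : (Real.sqrt d) ^ 2 = (d:ℝ) := Real.sq_sqrt hd0.le
  have ha0 : 0 < a := by rw [ha]; positivity
  have hc0 : (0:ℝ) ≤ 1 - 3 / (16 * d) := by
    have hd1 : (1:ℝ) ≤ d := by exact_mod_cast hd
    rw [sub_nonneg, div_le_one (by positivity)]
    linarith
  have key : ∀ x : EuclideanSpace ℝ (Fin d), 1 / 2 ≤ ‖x‖ → ‖x‖ ≤ 1 →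
      ∃ (k : Fin d) (ε : ℝ), (ε = 1 ∨ ε = -1) ∧
        ‖x - (ε * a) • EuclideanSpace.single k 1‖ ^ 2 ≤ 1 - 3 / (16 * d) := by
    intro x hx1 hx2
    have hnsq : ‖x‖ ^ 2 = ∑ i, (x i) ^ 2 := by
      rw [EuclideanSpace.norm_eq, Real.sq_sqrt (by positivity)]
      simp [sq_abs]
    -- find a big coordinate
    have hk : ∃ k : Fin d, 1 / (2 * Real.sqrt d) ≤ |x k| := by
      by_contra h
      push_neg at h
      have hne : (Finset.univ : Finset (Fin d)).Nonempty := by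
        simpa [Finset.univ_nonempty_iff] using Fin.pos_iff_nonempty.mp hd
      have hlt : ∑ i, (x i) ^ 2 < ∑ _i : Fin d, (1 / (2 * Real.sqrt d)) ^ 2 := by
        refine Finset.sum_lt_sum_of_nonempty hne fun i _ => ?_
        have := h i
        nlinarith [abs_nonneg (x i), sq_abs (x i)]
      have hsum : ∑ _i : Fin d, (1 / (2 * Real.sqrt d)) ^ 2 = 1 / 4 := by
        rw [Finset.sum_const, Finset.card_univ, Fintype.card_fin, nsmul_eq_mul]
        field_simp
        nlinarith
      have h14 : (1/2:ℝ) ^ 2 ≤ ‖x‖ ^ 2 := by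
        have := norm_nonneg x
        nlinarith
      rw [hnsq] at h14
      rw [hsum] at hlt
      norm_num at h14
      linarith
    obtain ⟨k, hk⟩ := hk
    refine ⟨k, if 0 ≤ x k then 1 else -1, by split <;> simp, ?_⟩
    set ε : ℝ := if 0 ≤ x k then 1 else -1 with hε
    have hεx : ε * x k = |x k| := by
      rw [hε]; split <;> simp_all [abs_of_nonneg, abs_of_neg, lt_of_not_ge]
    have hinner : (inner ℝ x ((ε * a) • EuclideanSpace.single k (1:ℝ)) : ℝ) = (ε * a) * x k := by
      rw [real_inner_smul_right, EuclideanSpace.inner_single_right]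
      simp [mul_comm]
    have hnorm1 : ‖(ε * a) • EuclideanSpace.single k (1:ℝ)‖ = |ε * a| := by
      rw [norm_smul, EuclideanSpace.norm_single]
      simp [Real.norm_eq_abs, abs_mul]
    have hεa : |ε * a| = a := by
      rw [abs_mul, abs_of_pos ha0, hε]; split <;> simp
    rw [norm_sub_sq_real, hinner, hnorm1, hεa]
    have hxk : 1 / (2 * Real.sqrt d) ≤ ε * x k := hεx ▸ hk
    have hxn : ‖x‖ ^ 2 ≤ 1 := by nlinarith [norm_nonneg x]
    have h3 : a * (1 / (2 * Real.sqrt d)) = 1 / (8 * (d:ℝ)) := by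
      rw [ha, div_mul_div_comm, one_mul,
        show (4 * Real.sqrt d) * (2 * Real.sqrt d) = 8 * (d:ℝ) by nlinarith]
    have h2 : 1 / (4 * (d:ℝ)) ≤ 2 * (ε * a * x k) := by
      have h4 : 1 / (8 * (d:ℝ)) ≤ a * (ε * x k) := by
        rw [← h3]; exact mul_le_mul_of_nonneg_left hxk ha0.le
      have h5 : 2 * (1 / (8 * (d:ℝ))) = 1 / (4 * (d:ℝ)) := by
        field_simp; ring
      nlinarith
    have ha2 : a ^ 2 = 1 / (16 * d) := by
      rw [ha, div_pow, one_pow, mul_pow, hs2]; norm_num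
    have : (1:ℝ) - 1 / (4 * d) + 1 / (16 * d) = 1 - 3 / (16 * d) := by
      field_simp; ring
    linarith
  refine ⟨key, ?_⟩
  intro x hx
  obtain ⟨hx1, hx2⟩ := hx
  obtain ⟨k, ε, hεor, hle⟩ := key x hx1 hx2
  have hr0 : 0 ≤ r := by rw [hr]; exact Real.sqrt_nonneg _
  have hdist : ‖x - (ε * a) • EuclideanSpace.single k 1‖ ≤ r := by
    rw [hr]
    have := Real.sqrt_le_sqrt hle
    rwa [Real.sqrt_sq (norm_nonneg _)] at this
  rcases hεor with h1 | h1
  · left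
    refine Set.mem_iUnion.mpr ⟨k, ?_⟩
    rw [Metric.mem_closedBall, dist_eq_norm]
    simpa [h1] using hdist
  · right
    refine Set.mem_iUnion.mpr ⟨k, ?_⟩
    rw [Metric.mem_closedBall, dist_eq_norm]
    have : x - (ε * a) • EuclideanSpace.single k 1
        = x - -(a • EuclideanSpace.single k 1) := by
      rw [h1]; module
    rwa [this] at hdist
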